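/- Under the ideal cluster assumption (A_{ij} = 0 whenever y_i ≠ y_j) and for α ∈ (0,1), every labeled instance i ≤ l satisfies F*_{i,y_i} ≥ 1 and F*_{i,c} = 0 for all c ≠ y_i; in particular every labeled instance is correctly predicted. -/

import Mathlib

open Matrix BigOperators Finset

attribute [local instance] Classical.propDecidable

/-- Row sum `d_i = Σ_j A_{ij}` of the affinity matrix. -/
noncomputable def rowSum {n : ℕ} (A : Matrix (Fin n) (Fin n) ℝ) (i : Fin n) : ℝ :=
  ∑ j, A i j

/-- The normalized matrix `S = D^{-1/2} A D^{-1/2}`. -/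
noncomputable def Smat {n : ℕ} (A : Matrix (Fin n) (Fin n) ℝ) : Matrix (Fin n) (Fin n) ℝ :=
  Matrix.diagonal (fun i => (Real.sqrt (rowSum A i))⁻¹) * A *
    Matrix.diagonal (fun i => (Real.sqrt (rowSum A i))⁻¹)

/-- Label matrix `Y` (indices `i` with `(i : ℕ) < l` are the labeled ones). -/
noncomputable def Ymat {n K : ℕ} (l : ℕ) (y : Fin n → Fin K) : Matrix (Fin n) (Fin K) ℝ :=
  fun i c => if (i : ℕ) < l ∧ y i = c then 1 else 0

/-- `F* = (I - α S)^{-1} Y`. -/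
noncomputable def Fstar {n K : ℕ} (l : ℕ) (y : Fin n → Fin K) (α : ℝ)
    (A : Matrix (Fin n) (Fin n) ℝ) : Matrix (Fin n) (Fin K) ℝ :=
  (1 - α • Smat A)⁻¹ * Ymat l y

/-- Instance `i` is correctly predicted: `F*_{i, y_i} > F*_{i, c}` for all `c ≠ y_i`. -/
def CorrectlyPredicted {n K : ℕ} (l : ℕ) (y : Fin n → Fin K) (α : ℝ)
    (A : Matrix (Fin n) (Fin n) ℝ) (i : Fin n) : Prop :=
  ∀ c : Fin K, c ≠ y i → Fstar l y α A i c < Fstar l y α A i (y i)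

/-- Accuracy on the unlabeled instances (those with `(i : ℕ) ≥ l`). -/
noncomputable def AccLP {n K : ℕ} (l : ℕ) (y : Fin n → Fin K) (α : ℝ)
    (A : Matrix (Fin n) (Fin n) ℝ) : ℝ :=
  ((Finset.univ.filter
      (fun i : Fin n => l ≤ (i : ℕ) ∧ CorrectlyPredicted l y α A i)).card : ℝ) /
    ((n : ℝ) - (l : ℝ))

/-- `i` and `j` are connected w.r.t. `B`: a finite sequence of at least one step
with positive affinities joins them. -/
def Connected {n : ℕ} (B : Matrix (Fin n) (Fin n) ℝ) : Fin n → Fin n → Prop :=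
  Relation.TransGen (fun i j => 0 < B i j)

section Aux

attribute [local instance] Matrix.linftyOpNormedAddCommGroup Matrix.linftyOpNormedSpace
  Matrix.linftyOpNormedRing

/-- Entries of `(1 - B)⁻¹` are given by the Neumann series when `‖B‖ < 1`. -/
lemma entry_hasSum_aux {n : ℕ} (B : Matrix (Fin n) (Fin n) ℝ) (h : ‖B‖ < 1) (i j : Fin n) :
    HasSum (fun k : ℕ => (B ^ k) i j) ((1 - B)⁻¹ i j) := by
  have h1 := hasSum_geom_series_inverse B h
  rw [Matrix.nonsing_inv_eq_ringInverse]
  exact h1.mapL (Matrix.entryLinearMap ℝ ℝ i j).toContinuousLinearMap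

lemma isUnit_one_sub_aux {n : ℕ} (B : Matrix (Fin n) (Fin n) ℝ) (h : ‖B‖ < 1) :
    IsUnit (1 - B) := isUnit_one_sub_of_norm_lt_one h

/-- The linfty operator norm of a matrix with all row sums of absolute values `≤ a`. -/
lemma norm_le_of_rowsum_aux {n : ℕ} (B : Matrix (Fin n) (Fin n) ℝ) {a : ℝ} (ha : 0 ≤ a)
    (hrow : ∀ i, ∑ j, |B i j| ≤ a) : ‖B‖ ≤ a := by
  rw [Matrix.linfty_opNorm_def]
  have : ((Finset.univ : Finset (Fin n)).sup fun i : Fin n => ∑ j, ‖B i j‖₊) ≤ ⟨a, ha⟩ := by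
    apply Finset.sup_le
    intro i _
    apply NNReal.coe_le_coe.mp
    push_cast
    refine (Eq.le ?_).trans (hrow i)
    simp [Real.norm_eq_abs]
  exact_mod_cast this

end Aux

/-- under the ideal cluster assumption, every labeled instance `i` satisfies
`F*_{i,y_i} ≥ 1` and `F*_{i,c} = 0` for `c ≠ y_i`; in particular it is correctly
predicted. -/
theorem lp_labeled_correct
    {n K : ℕ} (l : ℕ) (hl : 0 < l) (hln : l < n) (hK : 0 < K)
    (y : Fin n → Fin K) (α : ℝ) (hα0 : 0 < α) (hα1 : α < 1)
    (A : Matrix (Fin n) (Fin n) ℝ)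
    (hsym : A.IsSymm) (hnonneg : ∀ i j, 0 ≤ A i j) (hdiag : ∀ i, A i i = 0)
    (hrow : ∀ i, 0 < rowSum A i)
    (hcluster : ∀ i j, y i ≠ y j → A i j = 0)
    (i : Fin n) (hi : (i : ℕ) < l) :
    1 ≤ Fstar l y α A i (y i) ∧ (∀ c : Fin K, c ≠ y i → Fstar l y α A i c = 0) ∧
      CorrectlyPredicted l y α A i := by
  classical
  set d : Fin n → ℝ := rowSum A with hd
  set e : Fin n → ℝ := fun i => Real.sqrt (d i) with he
  have hepos : ∀ i, 0 < e i := fun i => Real.sqrt_pos.mpr (hrow i)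
  have hene : ∀ i, e i ≠ 0 := fun i => ne_of_gt (hepos i)
  have hee : ∀ i, e i * e i = d i := fun i => Real.mul_self_sqrt (le_of_lt (hrow i))
  -- P = D⁻¹ A,  B = α • P
  set P : Matrix (Fin n) (Fin n) ℝ := Matrix.diagonal (fun i => (d i)⁻¹) * A with hP
  set B : Matrix (Fin n) (Fin n) ℝ := α • P with hB
  have hPapp : ∀ i j, P i j = (d i)⁻¹ * A i j := by
    intro i j; simp [hP, Matrix.diagonal_mul]
  have hBapp : ∀ i j, B i j = α * ((d i)⁻¹ * A i j) := by
    intro i j; simp [hB, hPapp]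
  have hBnonneg : ∀ i j, 0 ≤ B i j := by
    intro i j
    rw [hBapp]
    exact mul_nonneg hα0.le (mul_nonneg (inv_nonneg.mpr (hrow i).le) (hnonneg i j))
  have hBcluster : ∀ i j, y i ≠ y j → B i j = 0 := by
    intro i j hij
    rw [hBapp, hcluster i j hij, mul_zero, mul_zero]
  -- norm bound
  letI := @Matrix.linftyOpNormedAddCommGroup (Fin n) (Fin n) ℝ _ _ _
  have hnorm : ‖B‖ < 1 := by
    have : ‖B‖ ≤ α := by
      apply norm_le_of_rowsum_aux B (le_of_lt hα0)
      intro i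
      have habs : ∀ j, |B i j| = α * ((d i)⁻¹ * A i j) := fun j => by
        rw [hBapp]
        exact abs_of_nonneg
          (mul_nonneg hα0.le (mul_nonneg (inv_nonneg.mpr (hrow i).le) (hnonneg i j)))
      have hsumA : ∑ j, A i j = d i := rfl
      calc ∑ j, |B i j| = ∑ j, α * ((d i)⁻¹ * A i j) :=
            Finset.sum_congr rfl fun j _ => habs j
        _ = α * ((d i)⁻¹ * ∑ j, A i j) := by
            rw [Finset.mul_sum, Finset.mul_sum]
        _ = α * 1 := by rw [hsumA, inv_mul_cancel₀ (ne_of_gt (hrow i))]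
        _ ≤ α := by rw [mul_one]
    linarith
  -- powers of B : nonneg entries and block structure
  have hpow_nonneg : ∀ (k : ℕ) (i j : Fin n), 0 ≤ (B ^ k) i j := by
    intro k
    induction k with
    | zero => intro i j; by_cases h : i = j <;> simp [h, Matrix.one_apply]
    | succ k ih =>
      intro i j
      rw [pow_succ, Matrix.mul_apply]
      exact Finset.sum_nonneg fun m _ => mul_nonneg (ih i m) (hBnonneg m j)
  have hpow_cluster : ∀ (k : ℕ) (i j : Fin n), y i ≠ y j → (B ^ k) i j = 0 := by
    intro k
    induction k with
    | zero =>
      intro i j hij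
      have : i ≠ j := fun h => hij (h ▸ rfl)
      simp [Matrix.one_apply, this]
    | succ k ih =>
      intro i j hij
      rw [pow_succ, Matrix.mul_apply]
      apply Finset.sum_eq_zero
      intro m _
      by_cases h : y i = y m
      · rw [hBcluster m j (h ▸ hij), mul_zero]
      · rw [ih i m h, zero_mul]
  -- G = (1 - B)⁻¹ entrywise facts
  set G : Matrix (Fin n) (Fin n) ℝ := (1 - B)⁻¹ with hG
  have hGsum : ∀ i j, HasSum (fun k : ℕ => (B ^ k) i j) (G i j) :=
    fun i j => entry_hasSum_aux B hnorm i j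
  have hGnonneg : ∀ i j, 0 ≤ G i j := by
    intro i j
    exact hasSum_le (fun k => hpow_nonneg k i j) hasSum_zero (hGsum i j)
  have hGcluster : ∀ i j, y i ≠ y j → G i j = 0 := by
    intro i j hij
    have : (fun k : ℕ => (B ^ k) i j) = fun _ => (0 : ℝ) := by
      funext k; exact hpow_cluster k i j hij
    have h0 : HasSum (fun _ : ℕ => (0 : ℝ)) (G i j) := this ▸ hGsum i j
    exact (h0.unique hasSum_zero)
  have hGdiag : ∀ j, 1 ≤ G j j := by
    intro j
    have := le_hasSum (hGsum j j) 0 (fun k _ => hpow_nonneg k j j)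
    simpa using this
  -- conjugation: 1 - α•S = E (1 - B) E'
  set E : Matrix (Fin n) (Fin n) ℝ := Matrix.diagonal e with hE
  set E' : Matrix (Fin n) (Fin n) ℝ := Matrix.diagonal (fun i => (e i)⁻¹) with hE'
  have hEE' : E * E' = 1 := by
    rw [hE, hE', Matrix.diagonal_mul_diagonal]
    convert Matrix.diagonal_one
    exact mul_inv_cancel₀ (hene _)
  have hE'E : E' * E = 1 := by
    rw [hE, hE', Matrix.diagonal_mul_diagonal]
    convert Matrix.diagonal_one
    exact inv_mul_cancel₀ (hene _)
  have hconj : (1 : Matrix (Fin n) (Fin n) ℝ) - α • Smat A = E * (1 - B) * E' := by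
    have hS : E * B * E' = α • Smat A := by
      ext i j
      have h1 : (E * B * E') i j = e i * B i j * (e j)⁻¹ := by
        rw [hE, hE', Matrix.mul_diagonal, Matrix.diagonal_mul]
      have h2 : (α • Smat A) i j = α * ((e i)⁻¹ * A i j * (e j)⁻¹) := by
        simp [Smat, Matrix.mul_diagonal, Matrix.diagonal_mul, ← hd, ← he]
        exact Or.inl rfl
      rw [h1, h2, hBapp]
      have hinv2 : e i * (d i)⁻¹ = (e i)⁻¹ := by
        rw [← hee i, mul_inv, ← mul_assoc, mul_inv_cancel₀ (hene i), one_mul]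
      rw [← hinv2]
      ring
    rw [Matrix.mul_sub, Matrix.sub_mul, mul_one, hEE']
    rw [hS]
  -- invertibility and formula for the inverse
  have hUnit : IsUnit (1 - B) := isUnit_one_sub_aux B hnorm
  have hdet : IsUnit (1 - B).det := (Matrix.isUnit_iff_isUnit_det _).mp hUnit
  have hMinv : (1 - B) * G = 1 := Matrix.mul_nonsing_inv _ hdet
  have hinv : (1 - α • Smat A)⁻¹ = E * G * E' := by
    apply Matrix.inv_eq_right_inv
    rw [hconj]
    calc E * (1 - B) * E' * (E * G * E')
        = E * (1 - B) * (E' * E) * G * E' := by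
          simp only [Matrix.mul_assoc]
      _ = E * ((1 - B) * G) * E' := by rw [hE'E]; simp only [Matrix.mul_assoc, Matrix.one_mul]
      _ = E * E' := by rw [hMinv, Matrix.mul_one]
      _ = 1 := hEE'
  -- Fstar entries
  have hF : ∀ c : Fin K, Fstar l y α A i c
      = e i * ∑ j, G i j * ((e j)⁻¹ * Ymat l y j c) := by
    intro c
    have h0 : Fstar l y α A i c = (E * (G * (E' * Ymat l y))) i c := by
      rw [Fstar, hinv, Matrix.mul_assoc, Matrix.mul_assoc]
    rw [h0, hE, Matrix.diagonal_mul, Matrix.mul_apply]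
    congr 1
    apply Finset.sum_congr rfl
    intro j _
    rw [hE', Matrix.diagonal_mul]
  -- the three conclusions
  have hmain1 : 1 ≤ Fstar l y α A i (y i) := by
    rw [hF (y i)]
    have hterm : ∀ j, 0 ≤ G i j * ((e j)⁻¹ * Ymat l y j (y i)) := by
      intro j
      apply mul_nonneg (hGnonneg i j)
      apply mul_nonneg (le_of_lt (inv_pos.mpr (hepos j)))
      unfold Ymat
      split_ifs <;> norm_num
    have hYii : Ymat l y i (y i) = 1 := by
      unfold Ymat
      rw [if_pos ⟨hi, rfl⟩]
    have hle : G i i * ((e i)⁻¹ * Ymat l y i (y i))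
        ≤ ∑ j, G i j * ((e j)⁻¹ * Ymat l y j (y i)) :=
      Finset.single_le_sum (fun j _ => hterm j) (Finset.mem_univ i)
    have h1 : (e i)⁻¹ ≤ G i i * ((e i)⁻¹ * Ymat l y i (y i)) := by
      rw [hYii, mul_one]
      nlinarith [hGdiag i, inv_pos.mpr (hepos i)]
    calc (1 : ℝ) = e i * (e i)⁻¹ := (mul_inv_cancel₀ (hene i)).symm
      _ ≤ e i * ∑ j, G i j * ((e j)⁻¹ * Ymat l y j (y i)) := by
          apply mul_le_mul_of_nonneg_left _ (le_of_lt (hepos i))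
          exact le_trans h1 hle
  have hmain2 : ∀ c : Fin K, c ≠ y i → Fstar l y α A i c = 0 := by
    intro c hc
    rw [hF c]
    have : ∀ j ∈ Finset.univ, G i j * ((e j)⁻¹ * Ymat l y j c) = 0 := by
      intro j _
      by_cases h : y j = c
      · have : y i ≠ y j := fun hh => hc (hh ▸ h).symm
        rw [hGcluster i j this, zero_mul]
      · have : Ymat l y j c = 0 := by
          unfold Ymat
          rw [if_neg (fun hh => h hh.2)]
        rw [this, mul_zero, mul_zero]
    rw [Finset.sum_eq_zero this, mul_zero]
  refine ⟨hmain1, hmain2, ?_⟩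
  intro c hc
  rw [hmain2 c hc]
  linarith
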